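/- If T = Toeplitz(T₀, T₁, ..., T_N) is a positive definite Hermitian d(N+1)×d(N+1) block Toeplitz matrix, then there exist vectors u_k ∈ ℂ^d, angles ω_k ∈ [−π,π), and positive scalars λ_k, for k = 1, ..., d(N+1), such that T_j = Σ_k λ_k u_k u_k* e^{ijω_k} for j = 0, 1, ..., N. -/

import Mathlib

open Matrix ComplexOrder

/-- Block Toeplitz matrix with blocks `T 0, T 1, ..., T N` (conjugate-transposed below
the block diagonal). -/
def blockToeplitz (d N : ℕ) (T : ℕ → Matrix (Fin d) (Fin d) ℂ) :
    Matrix (Fin (N + 1) × Fin d) (Fin (N + 1) × Fin d) ℂ :=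
  fun p q =>
    if p.1.1 ≤ q.1.1 then T (q.1.1 - p.1.1) p.2 q.2 else (T (p.1.1 - q.1.1))ᴴ p.2 q.2

open Module LinearMap

local notation "⟪" x ", " y "⟫" => @inner ℂ _ _ x y


lemma cayley_ne (t : ℝ) : Complex.I + (t : ℂ) ≠ 0 := by
  intro h
  have := congrArg Complex.im h
  simp at this

lemma norm_cayley (t : ℝ) : ‖(Complex.I - (t : ℂ)) / (Complex.I + t)‖ = 1 := by
  rw [norm_div]
  have h2 : ‖Complex.I - (t:ℂ)‖ = ‖Complex.I + (t:ℂ)‖ := by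
    simp only [Complex.norm_def]
    congr 1
    simp [Complex.normSq_apply]
  rw [h2, div_self]
  rw [ne_eq, norm_eq_zero]
  exact fun h => cayley_ne t (by simpa using h)

lemma cayley_inj : Function.Injective (fun t : ℝ => (Complex.I - (t:ℂ)) / (Complex.I + t)) := by
  intro a b hab
  simp only at hab
  rw [div_eq_div_iff (cayley_ne a) (cayley_ne b)] at hab
  have : (2 : ℂ) * Complex.I * a = 2 * Complex.I * b := by ring_nf at hab ⊢; linear_combination -hab
  have h2 : (a : ℂ) = b := by
    field_simp [Complex.I_ne_zero] at this
    exact_mod_cast this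
  exact_mod_cast h2

lemma exists_unit_avoid {E : Type*} [NormedAddCommGroup E] [InnerProductSpace ℂ E]
    [FiniteDimensional ℂ E] (u : E →ₗ[ℂ] E) :
    ∃ c : ℂ, ‖c‖ = 1 ∧ ¬ Module.End.HasEigenvalue u (-c) := by
  have hfin : Set.Finite {c : ℂ | Module.End.HasEigenvalue u (-c)} :=
    Set.Finite.preimage (f := fun c : ℂ => -c) neg_injective.injOn
      (Module.End.finite_hasEigenvalue u)
  have hrange : (Set.range (fun t : ℝ => (Complex.I - (t:ℂ)) / (Complex.I + t))).Infinite :=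
    Set.infinite_range_of_injective cayley_inj
  obtain ⟨c, hc1, hc2⟩ := (hrange.diff hfin).nonempty
  obtain ⟨t, rfl⟩ := hc1
  exact ⟨_, norm_cayley t, hc2⟩

lemma unitary_isometry_diagonalization {E : Type*} [NormedAddCommGroup E]
    [InnerProductSpace ℂ E] [FiniteDimensional ℂ E] (U : E →ₗᵢ[ℂ] E) :
    ∃ (b : OrthonormalBasis (Fin (finrank ℂ E)) ℂ E) (z : Fin (finrank ℂ E) → ℂ),
      (∀ k, ‖z k‖ = 1) ∧ ∀ k, U (b k) = z k • b k := by
  obtain ⟨c, hc1, hc2⟩ := exists_unit_avoid U.toLinearMap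
  have hcne : c ≠ 0 := by intro h; rw [h] at hc1; simp at hc1
  set u : E →ₗ[ℂ] E := U.toLinearMap with hu
  set w : E →ₗ[ℂ] E := c⁻¹ • u with hw
  have hcc : (starRingEnd ℂ) c⁻¹ * c⁻¹ = 1 := by
    rw [← Complex.normSq_eq_conj_mul_self]
    simp [Complex.normSq_eq_norm_sq, hc1]
  have hwinner : ∀ x y : E, ⟪w x, w y⟫ = ⟪x, y⟫ := by
    intro x y
    simp only [hw, LinearMap.smul_apply, inner_smul_left, inner_smul_right]
    rw [show (u x) = U x from rfl, show (u y) = U y from rfl, U.inner_map_map]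
    rw [show c⁻¹ * ((starRingEnd ℂ) c⁻¹ * (inner ℂ x y : ℂ)) =
      ((starRingEnd ℂ) c⁻¹ * c⁻¹) * (inner ℂ x y : ℂ) from by ring, hcc, one_mul]
  set q : E →ₗ[ℂ] E := 1 + w with hq
  have hqapp : ∀ v, q v = v + w v := fun v => rfl
  have hqinj : Function.Injective q := by
    rw [← LinearMap.ker_eq_bot, LinearMap.ker_eq_bot']
    intro v hv
    by_contra hvne
    apply hc2
    apply Module.End.hasEigenvalue_of_hasEigenvector (x := v)
    constructor
    · rw [Module.End.mem_eigenspace_iff]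
      have h1 : w v = -v := by
        have := hqapp v; rw [hv] at this
        linear_combination (norm := module) -this
      have h2 : c • w v = u v := by
        rw [hw]; simp [smul_smul, mul_inv_cancel₀ hcne]
      rw [h1] at h2
      rw [← h2]; simp
    · exact hvne
  have hqsurj : Function.Surjective q := (LinearMap.injective_iff_surjective).mp hqinj
  set qe : E ≃ₗ[ℂ] E := LinearEquiv.ofBijective q ⟨hqinj, hqsurj⟩ with hqe
  set h : E →ₗ[ℂ] E := Complex.I • ((1 - w) ∘ₗ (qe.symm : E ≃ₗ[ℂ] E).toLinearMap) with hh
  have happ : ∀ x, h x = Complex.I • (qe.symm x - w (qe.symm x)) := fun x => rfl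
  have hqe_symm : ∀ x : E, x = qe.symm x + w (qe.symm x) := by
    intro x
    conv_lhs => rw [← qe.apply_symm_apply x]
    rfl
  have hsym : h.IsSymmetric := by
    intro x y
    set a := qe.symm x with ha
    set b := qe.symm y with hb
    have hx : x = a + w a := hqe_symm x
    have hy : y = b + w b := hqe_symm y
    rw [happ x, happ y, ← ha, ← hb]
    conv_lhs => rw [hy]
    conv_rhs => rw [hx]
    simp only [inner_smul_left, inner_smul_right, inner_add_left, inner_add_right,
      inner_sub_left, inner_sub_right, hwinner, Complex.conj_I]
    ring
  set n := finrank ℂ E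
  set bas := hsym.eigenvectorBasis rfl with hbas
  set μ := hsym.eigenvalues rfl with hμ
  refine ⟨bas, fun k => c * ((Complex.I - (μ k : ℂ)) / (Complex.I + (μ k : ℂ))), ?_, ?_⟩
  · intro k
    rw [norm_mul, hc1, one_mul]
    exact norm_cayley (μ k)
  · intro k
    have hf : h (bas k) = (μ k : ℂ) • bas k := hsym.apply_eigenvectorBasis rfl k
    set f := bas k with hfdef
    set g := qe.symm f with hg
    have hfg : f = g + w g := hqe_symm f
    have E1 : Complex.I • (g - w g) = (μ k : ℂ) • (g + w g) := by
      rw [← hfg, ← happ f, hf]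
    have hμI : (μ k : ℂ) + Complex.I ≠ 0 := by
      intro hcon
      have := congrArg Complex.im hcon
      simp at this
    have h2 : ((μ k : ℂ) + Complex.I) • w g = (Complex.I - (μ k : ℂ)) • g := by
      linear_combination (norm := module) -E1
    have hwg : w g = ((Complex.I - (μ k : ℂ)) / (Complex.I + (μ k : ℂ))) • g := by
      have h3 := congrArg (fun v => ((μ k : ℂ) + Complex.I)⁻¹ • v) h2
      simp only [smul_smul, inv_mul_cancel₀ hμI, one_smul] at h3
      rw [h3]
      congr 1
      rw [div_eq_mul_inv, add_comm Complex.I]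
      ring
    have hwf : w f = ((Complex.I - (μ k : ℂ)) / (Complex.I + (μ k : ℂ))) • f := by
      conv_lhs => rw [hfg]
      rw [_root_.map_add, hwg, _root_.map_smul, hfg]
      rw [smul_add]
    have huf : U f = u f := rfl
    rw [show U (bas k) = u f from rfl]
    have h4 : u f = c • w f := by
      rw [hw]; simp [smul_smul, mul_inv_cancel₀ hcne]
    rw [h4, hwf, smul_smul]


section Aux

variable {d N : ℕ}

/-- put a `d`-vector into block `p` -/
def embBlk (p : Fin (N + 1)) (v : Fin d → ℂ) : (Fin (N + 1) × Fin d) → ℂ :=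
  fun i => if i.1 = p then v i.2 else 0

/-- embed a truncated vector into blocks `0..N-1` -/
def embLow (x : Fin N × Fin d → ℂ) : (Fin (N + 1) × Fin d) → ℂ :=
  fun i => if h : (i.1 : ℕ) < N then x (⟨i.1, h⟩, i.2) else 0

/-- embed a truncated vector into blocks `1..N` -/
def embHigh (x : Fin N × Fin d → ℂ) : (Fin (N + 1) × Fin d) → ℂ :=
  fun i => if h : 0 < (i.1 : ℕ) then
    x (⟨(i.1 : ℕ) - 1, by have := i.1.isLt; omega⟩, i.2) else 0

lemma embLow_castSucc (x : Fin N × Fin d → ℂ) (p : Fin N) (a : Fin d) :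
    embLow x (p.castSucc, a) = x (p, a) := by
  have h : ((p.castSucc : Fin (N+1)) : ℕ) < N := by simp
  have he : (⟨((p.castSucc : Fin (N+1)) : ℕ), h⟩ : Fin N) = p := Fin.ext (by simp)
  rw [embLow, dif_pos h, he]

lemma embLow_last (x : Fin N × Fin d → ℂ) (a : Fin d) :
    embLow x (Fin.last N, a) = 0 := by
  rw [embLow, dif_neg]; simp

lemma embHigh_zero (x : Fin N × Fin d → ℂ) (a : Fin d) :
    embHigh x ((0 : Fin (N+1)), a) = 0 := by
  rw [embHigh, dif_neg]; simp

lemma embHigh_succ (x : Fin N × Fin d → ℂ) (p : Fin N) (a : Fin d) :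
    embHigh x (p.succ, a) = x (p, a) := by
  have h : 0 < ((p.succ : Fin (N+1)) : ℕ) := by simp
  have he : (⟨((p.succ : Fin (N+1)) : ℕ) - 1, by have := p.isLt; simp⟩ : Fin N) = p :=
    Fin.ext (by simp)
  rw [embHigh, dif_pos h, he]

lemma sum_embLow (x : Fin N × Fin d → ℂ) (g : (Fin (N+1) × Fin d) → ℂ) :
    ∑ i, embLow x i * g i = ∑ j : Fin N × Fin d, x j * g (j.1.castSucc, j.2) := by
  rw [Fintype.sum_prod_type, Fintype.sum_prod_type, Fin.sum_univ_castSucc]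
  simp only [embLow_last, zero_mul, Finset.sum_const_zero, add_zero]
  refine Finset.sum_congr rfl fun p _ => Finset.sum_congr rfl fun a _ => ?_
  rw [embLow_castSucc]

lemma sum_embHigh (x : Fin N × Fin d → ℂ) (g : (Fin (N+1) × Fin d) → ℂ) :
    ∑ i, embHigh x i * g i = ∑ j : Fin N × Fin d, x j * g (j.1.succ, j.2) := by
  rw [Fintype.sum_prod_type, Fintype.sum_prod_type, Fin.sum_univ_succ]
  simp only [embHigh_zero, zero_mul, Finset.sum_const_zero, zero_add]
  refine Finset.sum_congr rfl fun p _ => Finset.sum_congr rfl fun a _ => ?_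
  rw [embHigh_succ]

lemma star_embLow (x : Fin N × Fin d → ℂ) : star (embLow x) = embLow (star x) := by
  funext i
  simp only [Pi.star_apply, embLow, apply_dite (star : ℂ → ℂ), star_zero]

lemma star_embHigh (x : Fin N × Fin d → ℂ) : star (embHigh x) = embHigh (star x) := by
  funext i
  simp only [Pi.star_apply, embHigh, apply_dite (star : ℂ → ℂ), star_zero]

/-- linearity of embLow -/
def embLowL : (Fin N × Fin d → ℂ) →ₗ[ℂ] ((Fin (N+1) × Fin d) → ℂ) where
  toFun := embLow
  map_add' x y := by funext i; simp only [embLow, Pi.add_apply]; split_ifs <;> simp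
  map_smul' c x := by funext i; simp only [embLow, Pi.smul_apply, RingHom.id_apply]
                      split_ifs <;> simp

def embHighL : (Fin N × Fin d → ℂ) →ₗ[ℂ] ((Fin (N+1) × Fin d) → ℂ) where
  toFun := embHigh
  map_add' x y := by funext i; simp only [embHigh, Pi.add_apply]; split_ifs <;> simp
  map_smul' c x := by funext i; simp only [embHigh, Pi.smul_apply, RingHom.id_apply]
                      split_ifs <;> simp

end Aux

lemma exists_isometry_extend {F E : Type*} [NormedAddCommGroup E] [InnerProductSpace ℂ E]
    [FiniteDimensional ℂ E] [AddCommGroup F] [Module ℂ F]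
    (G₀ G₁ : F →ₗ[ℂ] E) (hinj : Function.Injective G₀)
    (hgram : ∀ x y, ⟪G₁ x, G₁ y⟫ = ⟪G₀ x, G₀ y⟫) :
    ∃ U : E →ₗᵢ[ℂ] E, ∀ x, U (G₀ x) = G₁ x := by
  let eqv := LinearEquiv.ofInjective G₀ hinj
  have key : ∀ s : LinearMap.range G₀, ‖G₁ (eqv.symm s)‖ = ‖s‖ := by
    intro s
    have hcoe : (s : E) = G₀ (eqv.symm s) := by
      conv_lhs => rw [← eqv.apply_symm_apply s]
      rw [LinearEquiv.ofInjective_apply]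
    have h1 : ‖s‖ = ‖G₀ (eqv.symm s)‖ := by rw [← hcoe]; rfl
    rw [h1, norm_eq_sqrt_re_inner (𝕜 := ℂ), norm_eq_sqrt_re_inner (𝕜 := ℂ), hgram]
  let L : LinearMap.range G₀ →ₗᵢ[ℂ] E :=
    ⟨G₁ ∘ₗ (eqv.symm : LinearMap.range G₀ ≃ₗ[ℂ] F).toLinearMap, key⟩
  refine ⟨L.extend, fun x => ?_⟩
  have hmem : G₀ x ∈ LinearMap.range G₀ := LinearMap.mem_range_self _ x
  have h1 := L.extend_apply ⟨G₀ x, hmem⟩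
  have h2 : eqv.symm ⟨G₀ x, hmem⟩ = x := by
    apply eqv.injective
    rw [eqv.apply_symm_apply]
    apply Subtype.ext
    rw [LinearEquiv.ofInjective_apply]
  rw [show ((⟨G₀ x, hmem⟩ : LinearMap.range G₀) : E) = G₀ x from rfl] at h1
  rw [h1]
  show G₁ (eqv.symm ⟨G₀ x, hmem⟩) = G₁ x
  rw [h2]

open scoped MatrixOrder

noncomputable def mkVec {ι : Type*} [Fintype ι] (A : Matrix ι ι ℂ) (v : ι → ℂ) :
    EuclideanSpace ℂ ι := (WithLp.equiv 2 (ι → ℂ)).symm (A.mulVec v)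

lemma toeplitz_key (d N : ℕ) (M : Matrix (Fin (N+1) × Fin d) (Fin (N+1) × Fin d) ℂ)
    (hpd : M.PosDef)
    (hshift : ∀ (p q : Fin N) (a b : Fin d),
      M (p.succ, a) (q.succ, b) = M (p.castSucc, a) (q.castSucc, b)) :
    ∃ (w : Fin (finrank ℂ (EuclideanSpace ℂ (Fin (N+1) × Fin d))) → Fin d → ℂ)
      (z : Fin (finrank ℂ (EuclideanSpace ℂ (Fin (N+1) × Fin d))) → ℂ),
      (∀ k, ‖z k‖ = 1) ∧
      ∀ (p : Fin (N+1)) (a b : Fin d),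
        M ((0 : Fin (N+1)), a) (p, b) =
          ∑ k, z k ^ (p : ℕ) * (starRingEnd ℂ) (w k a) * w k b := by
  classical
  have hM : M.PosSemidef := hpd.posSemidef
  set A := CFC.sqrt M with hA
  have hAH : Aᴴ = A := (CFC.sqrt_nonneg M).isSelfAdjoint
  have hAA : A * A = M := CFC.sqrt_mul_sqrt_self M (Matrix.nonneg_iff_posSemidef.mpr hM)
  have hinner : ∀ v₁ v₂ : (Fin (N+1) × Fin d) → ℂ,
      ⟪mkVec A v₁, mkVec A v₂⟫ = star v₁ ⬝ᵥ M.mulVec v₂ := by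
    intro v₁ v₂
    rw [← hAA, ← Matrix.mulVec_mulVec, Matrix.dotProduct_mulVec]
    rw [show star v₁ ᵥ* A = star (A.mulVec v₁) by rw [Matrix.star_mulVec, hAH]]
    rw [PiLp.inner_apply]
    simp only [mkVec, WithLp.equiv_symm_apply, WithLp.ofLp_toLp, dotProduct, Pi.star_apply,
      RCLike.star_def, RCLike.inner_apply, mul_comm]
  have hgram : ∀ x y : Fin N × Fin d → ℂ,
      ⟪mkVec A (embHigh x), mkVec A (embHigh y)⟫
        = ⟪mkVec A (embLow x), mkVec A (embLow y)⟫ := by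
    intro x y
    rw [hinner, hinner]
    have hmvL : ∀ i, M.mulVec (embLow y) i = ∑ j : Fin N × Fin d,
        y j * M i (j.1.castSucc, j.2) := by
      intro i
      rw [Matrix.mulVec, dotProduct, ← sum_embLow]
      exact Finset.sum_congr rfl fun j _ => mul_comm _ _
    have hmvH : ∀ i, M.mulVec (embHigh y) i = ∑ j : Fin N × Fin d,
        y j * M i (j.1.succ, j.2) := by
      intro i
      rw [Matrix.mulVec, dotProduct, ← sum_embHigh]
      exact Finset.sum_congr rfl fun j _ => mul_comm _ _
    rw [show star (embLow x) ⬝ᵥ M.mulVec (embLow y)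
        = ∑ i, embLow (star x) i * M.mulVec (embLow y) i by
      rw [dotProduct, star_embLow]]
    rw [show star (embHigh x) ⬝ᵥ M.mulVec (embHigh y)
        = ∑ i, embHigh (star x) i * M.mulVec (embHigh y) i by
      rw [dotProduct, star_embHigh]]
    rw [sum_embLow, sum_embHigh]
    refine Finset.sum_congr rfl fun j _ => ?_
    rw [hmvL, hmvH, Finset.mul_sum, Finset.mul_sum]
    refine Finset.sum_congr rfl fun j' _ => ?_
    rw [hshift]
  let G₀ : (Fin N × Fin d → ℂ) →ₗ[ℂ] EuclideanSpace ℂ (Fin (N+1) × Fin d) :=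
    ((WithLp.linearEquiv 2 ℂ ((Fin (N+1) × Fin d) → ℂ)).symm.toLinearMap.comp
      A.mulVecLin).comp embLowL
  let G₁ : (Fin N × Fin d → ℂ) →ₗ[ℂ] EuclideanSpace ℂ (Fin (N+1) × Fin d) :=
    ((WithLp.linearEquiv 2 ℂ ((Fin (N+1) × Fin d) → ℂ)).symm.toLinearMap.comp
      A.mulVecLin).comp embHighL
  have hG₀app : ∀ x, G₀ x = mkVec A (embLow x) := fun x => rfl
  have hG₁app : ∀ x, G₁ x = mkVec A (embHigh x) := fun x => rfl
  have hG₀inj : Function.Injective G₀ := by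
    rw [← LinearMap.ker_eq_bot, LinearMap.ker_eq_bot']
    intro x hx
    by_contra hne
    have hemb : embLow x ≠ 0 := by
      intro h0
      apply hne
      funext j
      have := congrFun h0 (j.1.castSucc, j.2)
      rw [embLow_castSucc] at this
      simpa using this
    have hlt := hpd.dotProduct_mulVec_pos hemb
    have h0 : star (embLow x) ⬝ᵥ M.mulVec (embLow x) = 0 := by
      rw [← hinner, ← hG₀app, hx]
      simp
    rw [h0] at hlt
    exact lt_irrefl 0 hlt
  obtain ⟨U, hUG⟩ := exists_isometry_extend G₀ G₁ hG₀inj (by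
    intro x y
    rw [hG₀app, hG₀app, hG₁app, hG₁app]
    exact hgram x y)
  have hstep : ∀ (p : Fin N) (v : Fin d → ℂ),
      U (mkVec A (embBlk p.castSucc v)) = mkVec A (embBlk p.succ v) := by
    intro p v
    have h0 : embLow (fun j : Fin N × Fin d => if j.1 = p then v j.2 else 0)
        = embBlk p.castSucc v := by
      funext i
      rw [embLow, embBlk]
      by_cases h : (i.1 : ℕ) < N
      · rw [dif_pos h]
        by_cases hc : (⟨(i.1 : ℕ), h⟩ : Fin N) = p
        · rw [if_pos hc, if_pos]
          rw [← hc]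
          exact Fin.ext (by simp)
        · rw [if_neg hc, if_neg]
          intro hcon
          exact hc (Fin.ext (by simpa using congrArg Fin.val hcon))
      · rw [dif_neg h, if_neg]
        intro hcon
        apply h
        rw [hcon]
        simp [p.isLt]
    have h1 : embHigh (fun j : Fin N × Fin d => if j.1 = p then v j.2 else 0)
        = embBlk p.succ v := by
      funext i
      rw [embHigh, embBlk]
      by_cases h : 0 < (i.1 : ℕ)
      · rw [dif_pos h]
        by_cases hc : (⟨(i.1 : ℕ) - 1, by have := i.1.isLt; omega⟩ : Fin N) = p
        · rw [if_pos hc, if_pos]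
          apply Fin.ext
          have hv : (i.1 : ℕ) - 1 = (p : ℕ) := by rw [← hc]
          rw [Fin.val_succ]
          omega
        · rw [if_neg hc, if_neg]
          intro hcon
          apply hc
          apply Fin.ext
          have hv : (i.1 : ℕ) = (p : ℕ) + 1 := by rw [hcon]; simp
          simp [hv]
      · rw [dif_neg h, if_neg]
        intro hcon
        apply h
        rw [hcon]
        simp
    rw [← h0, ← h1, ← hG₀app, ← hG₁app]
    exact hUG _
  have hiter : ∀ (j : ℕ) (hj : j ≤ N) (v : Fin d → ℂ),
      (U.toLinearMap ^ j) (mkVec A (embBlk ⟨0, Nat.succ_pos N⟩ v))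
        = mkVec A (embBlk ⟨j, by omega⟩ v) := by
    intro j
    induction j with
    | zero => intro hj v; simp
    | succ n ih =>
      intro hj v
      rw [pow_succ', Module.End.mul_apply, ih (by omega) v]
      have h1 : (⟨n, by omega⟩ : Fin (N+1)) = (⟨n, by omega⟩ : Fin N).castSucc :=
        Fin.ext rfl
      have h2 : (⟨n + 1, by omega⟩ : Fin (N+1)) = (⟨n, by omega⟩ : Fin N).succ :=
        Fin.ext rfl
      rw [h1, h2]
      exact hstep _ v
  obtain ⟨bas, z, hz, hUz⟩ := unitary_isometry_diagonalization U
  have heig : ∀ k (j : ℕ), (U.toLinearMap ^ j) (bas k) = z k ^ j • bas k := by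
    intro k j
    induction j with
    | zero => simp
    | succ n ih =>
      rw [pow_succ', Module.End.mul_apply, ih, _root_.map_smul]
      rw [show U.toLinearMap (bas k) = U (bas k) from rfl, hUz k, smul_smul, pow_succ]
  refine ⟨fun k a => ⟪bas k, mkVec A (embBlk 0 (Pi.single a 1))⟫, z, hz, ?_⟩
  intro p a b
  have hδ : ∀ (q : Fin (N+1)) (c : Fin d),
      embBlk q (Pi.single c 1) = Pi.single ((q, c) : Fin (N+1) × Fin d) (1 : ℂ) := by
    intro q c
    funext i
    rcases i with ⟨q', c'⟩
    simp only [embBlk]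
    by_cases h1 : q' = q <;> by_cases h2 : c' = c <;>
      simp [h1, h2, Pi.single_apply, Prod.ext_iff]
  have hstar1 : star (Pi.single (((0 : Fin (N+1)), a) : Fin (N+1) × Fin d) (1 : ℂ)
        : (Fin (N+1) × Fin d) → ℂ)
      = (Pi.single (((0 : Fin (N+1)), a) : Fin (N+1) × Fin d) (1 : ℂ)
        : (Fin (N+1) × Fin d) → ℂ) := by
    funext i
    by_cases h : i = (((0 : Fin (N+1)), a) : Fin (N+1) × Fin d) <;>
      simp [h, Pi.single_apply]
  have hM1 : M ((0 : Fin (N+1)), a) (p, b)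
      = ⟪mkVec A (embBlk 0 (Pi.single a 1)), mkVec A (embBlk p (Pi.single b 1))⟫ := by
    rw [hinner, hδ, hδ, hstar1, Matrix.mulVec_single, single_dotProduct]
    simp
  have hp0 : (0 : Fin (N+1)) = ⟨0, Nat.succ_pos N⟩ := rfl
  have hpp : p = ⟨(p : ℕ), by omega⟩ := Fin.ext rfl
  have hM2 : mkVec A (embBlk p (Pi.single b 1))
      = (U.toLinearMap ^ (p : ℕ)) (mkVec A (embBlk ⟨0, Nat.succ_pos N⟩ (Pi.single b 1))) := by
    rw [hiter (p : ℕ) (by omega) (Pi.single b 1)]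
  rw [hM1, hM2]
  conv_lhs =>
    rw [show mkVec A (embBlk ⟨0, Nat.succ_pos N⟩ (Pi.single b 1))
      = ∑ k, ⟪bas k, mkVec A (embBlk 0 (Pi.single b 1))⟫ • bas k from
        (bas.sum_repr' _).symm]
  rw [_root_.map_sum, inner_sum]
  refine Finset.sum_congr rfl fun k _ => ?_
  rw [_root_.map_smul, heig k, inner_smul_right, inner_smul_right]
  rw [← inner_conj_symm (mkVec A (embBlk 0 (Pi.single a 1))) (bas k)]
  ring

/-- Tismenetsky's decomposition theorem.  If the Hermitian block Toeplitz
matrix `Toeplitz(T₀, ..., T_N)` is positive definite, then there are `d(N+1)` vectors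
`u_k ∈ ℂ^d`, angles `ω_k ∈ [−π, π)` and scalars `λ_k > 0` with
`T_j = Σ_k λ_k u_k u_k* e^{ijω_k}` for `j = 0, ..., N`. -/
theorem tismenetsky_decomposition (d N : ℕ) (T : ℕ → Matrix (Fin d) (Fin d) ℂ)
    (hT0 : (T 0).IsHermitian) (hpd : (blockToeplitz d N T).PosDef) :
    ∃ (u : Fin (d * (N + 1)) → Fin d → ℂ) (ω : Fin (d * (N + 1)) → ℝ)
      (lam : Fin (d * (N + 1)) → ℝ),
      (∀ k, ω k ∈ Set.Ico (-Real.pi) Real.pi ∧ 0 < lam k) ∧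
      ∀ j ≤ N, T j = ∑ k, ((lam k : ℂ) * Complex.exp (Complex.I * j * ω k)) •
        vecMulVec (u k) (star (u k)) := by
  classical
  have hshift : ∀ (p q : Fin N) (a b : Fin d),
      blockToeplitz d N T (p.succ, a) (q.succ, b)
        = blockToeplitz d N T (p.castSucc, a) (q.castSucc, b) := by
    intro p q a b
    simp only [blockToeplitz, Fin.val_succ, Fin.coe_castSucc]
    by_cases h : (p : ℕ) ≤ (q : ℕ)
    · rw [if_pos (by omega), if_pos h, show (q : ℕ) + 1 - ((p : ℕ) + 1) = (q : ℕ) - p from by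
        omega]
    · rw [if_neg (by omega), if_neg h, show (p : ℕ) + 1 - ((q : ℕ) + 1) = (p : ℕ) - q from by
        omega]
  obtain ⟨w, z, hz, hrep⟩ := toeplitz_key d N (blockToeplitz d N T) hpd hshift
  have hcard : d * (N + 1) = finrank ℂ (EuclideanSpace ℂ (Fin (N+1) × Fin d)) := by
    rw [finrank_euclideanSpace, Fintype.card_prod, Fintype.card_fin, Fintype.card_fin,
      Nat.mul_comm]
  let e : Fin (d * (N+1)) ≃ Fin (finrank ℂ (EuclideanSpace ℂ (Fin (N+1) × Fin d))) :=
    finCongr hcard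
  let ω : Fin (d * (N+1)) → ℝ := fun k =>
    if Complex.arg (z (e k)) = Real.pi then -Real.pi else Complex.arg (z (e k))
  have hzabs : ∀ k', ‖z k'‖ = 1 := fun k' => by
    exact hz k'
  have hexp : ∀ k', Complex.exp ((Complex.arg (z k') : ℂ) * Complex.I) = z k' := by
    intro k'
    have h1 := Complex.norm_mul_exp_arg_mul_I (z k')
    rwa [hzabs k', Complex.ofReal_one, one_mul] at h1
  have hωexp : ∀ k, Complex.exp ((ω k : ℂ) * Complex.I) = z (e k) := by
    intro k
    by_cases h : Complex.arg (z (e k)) = Real.pi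
    · show Complex.exp ((((if Complex.arg (z (e k)) = Real.pi then -Real.pi
        else Complex.arg (z (e k))) : ℝ) : ℂ) * Complex.I) = z (e k)
      rw [if_pos h, ← hexp (e k), h]
      push_cast
      rw [neg_mul, Complex.exp_neg, Complex.exp_pi_mul_I]
      norm_num
    · show Complex.exp ((((if Complex.arg (z (e k)) = Real.pi then -Real.pi
        else Complex.arg (z (e k))) : ℝ) : ℂ) * Complex.I) = z (e k)
      rw [if_neg h]
      exact hexp (e k)
  refine ⟨fun k => star (w (e k)), ω, fun _ => 1, ?_, ?_⟩
  · intro k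
    refine ⟨?_, one_pos⟩
    show (if Complex.arg (z (e k)) = Real.pi then -Real.pi
      else Complex.arg (z (e k))) ∈ Set.Ico (-Real.pi) Real.pi
    by_cases h : Complex.arg (z (e k)) = Real.pi
    · rw [if_pos h]
      exact ⟨le_refl _, neg_lt_self Real.pi_pos⟩
    · rw [if_neg h]
      exact ⟨(Complex.neg_pi_lt_arg _).le, lt_of_le_of_ne (Complex.arg_le_pi _) h⟩
  · intro j hj
    ext a b
    have hTab : T j a b
        = blockToeplitz d N T ((0 : Fin (N+1)), a) ((⟨j, by omega⟩ : Fin (N+1)), b) := by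
      simp only [blockToeplitz]
      rw [if_pos (by simp)]
      simp
    rw [hTab, hrep]
    rw [Matrix.sum_apply]
    rw [← Equiv.sum_comp e (fun k' => z k' ^ (((⟨j, by omega⟩ : Fin (N+1))) : ℕ)
      * (starRingEnd ℂ) (w k' a) * w k' b)]
    refine Finset.sum_congr rfl fun k _ => ?_
    simp only [Matrix.smul_apply, Matrix.vecMulVec_apply, Pi.star_apply, star_star,
      smul_eq_mul, one_mul]
    rw [show Complex.I * (j : ℂ) * ((ω k : ℝ) : ℂ)
      = (j : ℕ) * (((ω k : ℝ) : ℂ) * Complex.I) from by push_cast; ring]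
    rw [Complex.exp_nat_mul, hωexp k]
    rw [Complex.star_def]
    push_cast
    ring
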